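/- For any simplicial complex X on vertex set V with facet ordering ≺: σ_1 ≺ ⋯ ≺ σ_m (m ≥ 1), one has M_≺(X) ≤ m − |V| + |σ_1| + Σ_{j=2}^{m} (dim σ_j − conn_≺ σ_j), where conn_≺ σ_j = max{|σ_i ∩ σ_j| : i < j} and dim σ_j = |σ_j| − 1. -/

import Mathlib

open Finset

variable {V : Type*} [DecidableEq V] [Fintype V]

/-- An abstract simplicial complex: a finite collection of faces closed under subsets. -/
def IsComplex (X : Finset (Finset V)) : Prop :=
  ∀ s ∈ X, ∀ t, t ⊆ s → t ∈ X

/-- A collection of faces is a simplex if it is the full power set of some vertex set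
(possibly empty). -/
def IsSimplexC (Y : Finset (Finset V)) : Prop := ∃ τ : Finset V, Y = τ.powerset

/-- The induced subcomplex `X[W]`. -/
def indOn (X : Finset (Finset V)) (W : Finset V) : Finset (Finset V) :=
  X.filter (fun s => s ⊆ W)

/-- The `ℤ/2ℤ` boundary of a chain, a chain being recorded as the finite set of faces with
coefficient `1`.  The coefficient of `τ` in `∂ c` is the parity of the number of faces of `c`
covering `τ`.  (This includes the augmentation `∂₀`, with `∅` playing the role of the
generator of `C₋₁`, so homology is reduced homology.) -/
def bdry (c : Finset (Finset V)) : Finset (Finset V) :=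
  Finset.univ.filter (fun τ => Odd (c.filter (fun s => τ ⊆ s ∧ s.card = τ.card + 1)).card)

/-- Sum of chains over `ℤ/2ℤ` (symmetric difference). -/
def chAdd (c d : Finset (Finset V)) : Finset (Finset V) := (c \ d) ∪ (d \ c)

/-- An `n`-dimensional chain of `X` (each face has `n+1` vertices). -/
def IsNChain (X : Finset (Finset V)) (n : ℕ) (c : Finset (Finset V)) : Prop :=
  c ⊆ X ∧ ∀ s ∈ c, s.card = n + 1

/-- An `n`-cycle of `X` (reduced: `0`-cycles have evenly many vertices). -/
def IsNCycle (X : Finset (Finset V)) (n : ℕ) (c : Finset (Finset V)) : Prop :=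
  IsNChain X n c ∧ bdry c = ∅

/-- An `n`-boundary of `X`. -/
def IsNBdry (X : Finset (Finset V)) (n : ℕ) (c : Finset (Finset V)) : Prop :=
  ∃ d, IsNChain X (n + 1) d ∧ bdry d = c

/-- `X` is `d`-Leray: all reduced homology of induced subcomplexes vanishes in
dimensions `≥ d`. -/
def IsLeray (X : Finset (Finset V)) (d : ℕ) : Prop :=
  ∀ W : Finset V, ∀ i : ℕ, d ≤ i → ∀ c,
    IsNCycle (indOn X W) i c → IsNBdry (indOn X W) i c

/-- The Leray number `L(X)`. -/
noncomputable def lerayNum (X : Finset (Finset V)) : ℕ := sInf {d | IsLeray X d}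

/-- The facets (maximal faces) of `X`. -/
def facetsOf (X : Finset (Finset V)) : Finset (Finset V) :=
  X.filter (fun s => ∀ t ∈ X, s ⊆ t → s = t)

/-- `σ 0, …, σ (m-1)` is an enumeration (linear ordering) of the facets of `X`. -/
def IsFacetEnum (X : Finset (Finset V)) (m : ℕ) (σ : ℕ → Finset V) : Prop :=
  (∀ i, i < m → σ i ∈ facetsOf X) ∧ (∀ s ∈ facetsOf X, ∃ i, i < m ∧ σ i = s) ∧
    (∀ i j, i < m → j < m → σ i = σ j → i = j)

/-- `X_j = ⋃_{i < j} Δ(σ i)`. -/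
def cUnion (σ : ℕ → Finset V) (j : ℕ) : Finset (Finset V) :=
  (Finset.range j).biUnion (fun i => (σ i).powerset)

-- `Mval σ j = M_≺(X_{j+1})`: starts at `1`, increases by `1` exactly when the newly
-- attached simplex meets the union of the previous ones in a non-simplex.
open Classical in
noncomputable def Mval (σ : ℕ → Finset V) : ℕ → ℕ
  | 0 => 1
  | (j+1) => Mval σ j + (if IsSimplexC (cUnion σ (j+1) ∩ (σ (j+1)).powerset) then 0 else 1)

/-- `M(X)`: the minimum of `M_≺(X)` over all facet orderings. -/
noncomputable def Mnum (X : Finset (Finset V)) : ℕ :=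
  sInf {k | ∃ m σ, 0 < m ∧ IsFacetEnum X m σ ∧ k = Mval σ (m - 1)}

/-- The facet ordering `σ 0 ≺ ⋯ ≺ σ (m-1)` is a weak shelling. -/
def IsWeakShelling (σ : ℕ → Finset V) (m : ℕ) : Prop :=
  ∀ j, 1 ≤ j → j < m → ∃ u ∈ σ j, IsSimplexC (indOn (cUnion σ j) ((σ j).erase u))

/-- `c` is the edge set of a cycle (graph cycle, length `≥ 3`). -/
def IsCycleEdges (c : Finset (Finset V)) : Prop :=
  ∃ n : ℕ, 3 ≤ n ∧ ∃ f : ℕ → V, (∀ i j, i < n → j < n → f i = f j → i = j) ∧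
    c = (Finset.range n).image (fun i => ({f i, f ((i + 1) % n)} : Finset V))


lemma step_bound_aux (σ : ℕ → Finset V) (k : ℕ) :
    (Mval σ (k+1) : ℤ) ≤ (Mval σ k : ℤ) +
      ((((Finset.range (k+1)).biUnion σ ∩ σ (k+1)).card : ℤ) -
        ((Finset.range (k+1)).sup (fun i => (σ i ∩ σ (k+1)).card) : ℕ)) := by
  classical
  set j := k + 1 with hjdef
  obtain ⟨i0, hi0, hcEq⟩ := Finset.exists_mem_eq_sup (Finset.range j)
    ⟨0, Finset.mem_range.mpr (Nat.succ_pos k)⟩ (fun i => (σ i ∩ σ j).card)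
  have hsub : σ i0 ∩ σ j ⊆ (Finset.range j).biUnion σ ∩ σ j :=
    Finset.inter_subset_inter (Finset.subset_biUnion_of_mem σ hi0) (subset_refl _)
  have hle : (σ i0 ∩ σ j).card ≤ ((Finset.range j).biUnion σ ∩ σ j).card :=
    Finset.card_le_card hsub
  rw [show Mval σ (k+1) = Mval σ k +
    (if IsSimplexC (cUnion σ (k+1) ∩ (σ (k+1)).powerset) then 0 else 1) from rfl]
  by_cases heq : ((Finset.range j).biUnion σ ∩ σ j).card = (σ i0 ∩ σ j).card
  · have hset : σ i0 ∩ σ j = (Finset.range j).biUnion σ ∩ σ j :=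
      Finset.eq_of_subset_of_card_le hsub (le_of_eq heq)
    have hsim : IsSimplexC (cUnion σ j ∩ (σ j).powerset) := by
      refine ⟨σ i0 ∩ σ j, ?_⟩
      ext τ
      simp only [cUnion, Finset.mem_inter, Finset.mem_biUnion, Finset.mem_powerset,
        Finset.mem_range]
      constructor
      · rintro ⟨⟨i, hi, hτi⟩, hτj⟩
        rw [hset]
        exact Finset.subset_inter
          (hτi.trans (Finset.subset_biUnion_of_mem σ (Finset.mem_range.mpr hi))) hτj
      · intro hτ
        exact ⟨⟨i0, Finset.mem_range.mp hi0, hτ.trans Finset.inter_subset_left⟩,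
          hτ.trans Finset.inter_subset_right⟩
    rw [if_pos hsim, hcEq, heq]
    push_cast
    omega
  · have hlt : (σ i0 ∩ σ j).card < ((Finset.range j).biUnion σ ∩ σ j).card :=
      lt_of_le_of_ne hle (fun h => heq h.symm)
    rw [hcEq]
    split_ifs <;> push_cast <;> omega

lemma main_bound_aux (σ : ℕ → Finset V) (k : ℕ) :
    (Mval σ k : ℤ) ≤ ((k+1 : ℕ) : ℤ) - ((Finset.range (k+1)).biUnion σ).card + (σ 0).card +
      ∑ j ∈ Finset.Ico 1 (k+1), (((σ j).card : ℤ) - 1 -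
        ((Finset.range j).sup (fun i => (σ i ∩ σ j).card) : ℕ)) := by
  induction k with
  | zero =>
    simp [Mval, Finset.range_one]
  | succ k ih =>
    have hstep := step_bound_aux σ k
    have hcard : ((Finset.range (k+2)).biUnion σ).card +
        (σ (k+1) ∩ (Finset.range (k+1)).biUnion σ).card =
        (σ (k+1)).card + ((Finset.range (k+1)).biUnion σ).card := by
      rw [show k+2 = (k+1)+1 from rfl, Finset.range_add_one, Finset.biUnion_insert]
      exact Finset.card_union_add_card_inter _ _
    have hcomm : σ (k+1) ∩ (Finset.range (k+1)).biUnion σ =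
        (Finset.range (k+1)).biUnion σ ∩ σ (k+1) := Finset.inter_comm _ _
    rw [hcomm] at hcard
    have hcardZ : (((Finset.range (k+2)).biUnion σ).card : ℤ) +
        (((Finset.range (k+1)).biUnion σ ∩ σ (k+1)).card : ℤ) =
        ((σ (k+1)).card : ℤ) + (((Finset.range (k+1)).biUnion σ).card : ℤ) := by
      exact_mod_cast congrArg (Nat.cast : ℕ → ℤ) hcard
    rw [Finset.sum_Ico_succ_top (by omega : 1 ≤ k+1)]
    push_cast
    push_cast at ih hstep
    linarith

/-- `M_≺(X) ≤ m − |V| + |σ₁| + Σ_{j=2}^m (dim σ_j − conn_≺ σ_j)`. -/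
theorem Mval_le_connectivity_bound (X : Finset (Finset V)) (m : ℕ) (σ : ℕ → Finset V)
    (hX : IsComplex X) (hm : 1 ≤ m) (henum : IsFacetEnum X m σ) :
    (Mval σ (m - 1) : ℤ) ≤
      (m : ℤ) - ((Finset.range m).biUnion σ).card + (σ 0).card +
        ∑ j ∈ Finset.Ico 1 m, (((σ j).card : ℤ) - 1 -
          ((Finset.range j).sup (fun i => (σ i ∩ σ j).card) : ℕ)) := by
  obtain ⟨k, rfl⟩ : ∃ k, m = k + 1 := ⟨m - 1, by omega⟩
  simpa using main_bound_aux σ k
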